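/- Let (I, J) be an ideal cotorsion pair in a triangulated category T (meaning J = I^⊥ and I = ^⊥J with respect to the phantom ideal Φ of all morphisms f such that f factors as prescribed by the class of all triangles). Let j^* : T ⥤ T'' and j_! , j_* : T'' ⥤ T be triangulated functors with adjunctions (j_!, j^*) and (j^*, j_*), all compatible with shift. If j_! j^*(I) ⊆ I, then j_* j^*(J) ⊆ J. -/
import Mathlib

open CategoryTheory Category Limits Pretriangulated

/-- A class of morphisms in a category. -/
abbrev MorphismClass (C : Type*) [Category C] := ∀ ⦃X Y : C⦄, (X ⟶ Y) → Prop

/-- An ideal of a preadditive category: an additive subgroup of each Hom-group, closed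
under arbitrary pre- and post-composition. -/
structure CatIdeal (C : Type*) [Category C] [Preadditive C] where
  mem : MorphismClass C
  zero_mem : ∀ (X Y : C), mem (0 : X ⟶ Y)
  neg_mem : ∀ ⦃X Y : C⦄ ⦃f : X ⟶ Y⦄, mem f → mem (-f)
  add_mem : ∀ ⦃X Y : C⦄ ⦃f g : X ⟶ Y⦄, mem f → mem g → mem (f + g)
  comp_mem : ∀ ⦃W X Y Z : C⦄ (h : W ⟶ X) ⦃f : X ⟶ Y⦄ (k : Y ⟶ Z),
    mem f → mem (h ≫ f ≫ k)

/-- The image ideal `F(I)`: all morphisms of the form `g ≫ F(α) ≫ h` with `α ∈ I`. -/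
def imageMem {C D : Type*} [Category C] [Category D] (F : C ⥤ D)
    (I : MorphismClass C) : MorphismClass D :=
  fun A B f => ∃ (X Y : C) (α : X ⟶ Y) (g : A ⟶ F.obj X) (h : F.obj Y ⟶ B),
    I α ∧ f = g ≫ F.map α ≫ h

/-- The right orthogonal of `I` with respect to the phantom ideal `Φ`:
`β : A ⟶ B` lies in `I^⊥` iff `α ≫ φ ≫ β⟦1⟧ = 0` for all `α ∈ I` and all `φ ∈ Φ`. -/
def rOrth {C : Type*} [Category C] [Preadditive C] [HasShift C ℤ]
    (Φ I : MorphismClass C) : MorphismClass C :=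
  fun A B β => ∀ ⦃X Y : C⦄ (α : X ⟶ Y), I α → ∀ (φ : Y ⟶ A⟦(1 : ℤ)⟧), Φ φ →
    α ≫ φ ≫ β⟦(1 : ℤ)⟧' = 0

/-- The left orthogonal of `J` with respect to the phantom ideal `Φ`:
`α : X ⟶ Y` lies in `^⊥J` iff `α ≫ φ ≫ β⟦1⟧ = 0` for all `β ∈ J` and all `φ ∈ Φ`. -/
def lOrth {C : Type*} [Category C] [Preadditive C] [HasShift C ℤ]
    (Φ J : MorphismClass C) : MorphismClass C :=
  fun X Y α => ∀ ⦃A B : C⦄ (β : A ⟶ B), J β → ∀ (φ : Y ⟶ A⟦(1 : ℤ)⟧), Φ φ →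
    α ≫ φ ≫ β⟦(1 : ℤ)⟧' = 0

/-- The class of all morphisms. -/
def allMor (C : Type*) [Category C] : MorphismClass C := fun _ _ _ => True

open ZeroObject in
/-- A right adjoint between categories with zero objects and zero morphisms
preserves zero morphisms. -/
lemma aux_radj_map_zero {C D : Type*} [Category C] [Category D]
    [Preadditive C] [Preadditive D] [HasZeroObject C] [HasZeroObject D]
    {F : C ⥤ D} {G : D ⥤ C} (adj : F ⊣ G) {X Y : D} :
    G.map (0 : X ⟶ Y) = 0 := by
  haveI := adj.rightAdjoint_preservesLimits
  have hT : IsTerminal (G.obj (0 : D)) :=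
    IsTerminal.isTerminalObj G _ (isZero_zero D).isTerminal
  have hZ : IsZero (G.obj (0 : D)) := by
    rw [IsZero.iff_id_eq_zero]
    exact hT.hom_ext _ _
  have h0 : (0 : X ⟶ Y) = (0 : X ⟶ (0 : D)) ≫ (0 : (0 : D) ⟶ Y) := by simp
  rw [h0, G.map_comp, hZ.eq_of_tgt (G.map (0 : X ⟶ (0 : D))) 0, zero_comp]

/-- Any morphism into a value of a right adjoint factors canonically. -/
lemma aux_adj_factor {C D : Type*} [Category C] [Category D]
    {F : C ⥤ D} {G : D ⥤ C} (adj : F ⊣ G) {X : C} {Z : D} (χ : X ⟶ G.obj Z) :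
    χ = adj.unit.app X ≫ G.map (F.map χ ≫ adj.counit.app Z) := by
  conv_lhs => rw [← (adj.homEquiv X Z).apply_symm_apply χ]
  rw [Adjunction.homEquiv_counit, Adjunction.homEquiv_unit]

/-- Stability transport: if `(I, J)` is an ideal cotorsion pair in `T` (with respect to
the phantom ideal of all morphisms) and `j_! j^*(I) ⊆ I`, then `j_* j^*(J) ⊆ J`. -/
theorem stmt8 {T T'' : Type*} [Category T] [Category T'']
    [HasZeroObject T] [HasZeroObject T''] [Preadditive T] [Preadditive T'']
    [HasShift T ℤ] [HasShift T'' ℤ]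
    [∀ n : ℤ, (shiftFunctor T n).Additive] [∀ n : ℤ, (shiftFunctor T'' n).Additive]
    [Pretriangulated T] [Pretriangulated T'']
    (jShriek : T'' ⥤ T) (jUpper : T ⥤ T'') (jStar : T'' ⥤ T)
    [jShriek.CommShift ℤ] [jUpper.CommShift ℤ] [jStar.CommShift ℤ]
    (adj₁ : jShriek ⊣ jUpper) (adj₂ : jUpper ⊣ jStar)
    (I J : CatIdeal T)
    (hJ : ∀ ⦃A B : T⦄ (β : A ⟶ B), J.mem β ↔ rOrth (allMor T) I.mem β)
    (hI : ∀ ⦃X Y : T⦄ (α : X ⟶ Y), I.mem α ↔ lOrth (allMor T) J.mem α)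
    (hstab : ∀ ⦃X Y : T⦄ (f : X ⟶ Y), imageMem (jUpper ⋙ jShriek) I.mem f → I.mem f) :
    ∀ ⦃X Y : T⦄ (f : X ⟶ Y), imageMem (jUpper ⋙ jStar) J.mem f → J.mem f := by
  intro X Y f hf
  obtain ⟨A, B, β, g, h, hβ, rfl⟩ := hf
  rw [hJ]
  intro X' Y' α hα φ _
  -- notation
  set Z : T'' := jUpper.obj (A⟦(1 : ℤ)⟧) with hZdef
  set ψ : Y' ⟶ jStar.obj Z :=
    φ ≫ g⟦(1 : ℤ)⟧' ≫ (jStar.commShiftIso (1 : ℤ)).inv.app (jUpper.obj A) ≫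
      jStar.map ((jUpper.commShiftIso (1 : ℤ)).inv.app A) with hψdef
  set w : jUpper.obj X' ⟶ Z := jUpper.map (α ≫ ψ) ≫ adj₂.counit.app Z with hwdef
  set α₀ := jShriek.map (jUpper.map α) with hα₀def
  set φ₀ : jShriek.obj (jUpper.obj Y') ⟶ A⟦(1 : ℤ)⟧ :=
    jShriek.map (jUpper.map ψ ≫ adj₂.counit.app Z) ≫ adj₁.counit.app (A⟦(1 : ℤ)⟧)
    with hφ₀def
  have hα₀ : I.mem α₀ :=
    hstab _ ⟨X', Y', α, 𝟙 _, 𝟙 _, hα, by simp [hα₀def]⟩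
  have ht : α₀ ≫ φ₀ ≫ β⟦(1 : ℤ)⟧' = 0 := (hJ β).mp hβ α₀ hα₀ φ₀ trivial
  -- transpose along adj₁
  have hw : w ≫ jUpper.map (β⟦(1 : ℤ)⟧') = 0 := by
    rw [aux_adj_factor adj₁ w, assoc, ← jUpper.map_comp, assoc]
    have : jShriek.map w ≫ adj₁.counit.app (A⟦(1 : ℤ)⟧) ≫ β⟦(1 : ℤ)⟧' = 0 := by
      rw [hwdef, jUpper.map_comp, jShriek.map_comp, jShriek.map_comp]
      simpa [hα₀def, hφ₀def, jShriek.map_comp, assoc] using ht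
    rw [this, aux_radj_map_zero adj₁, comp_zero]
  -- transpose along adj₂
  have hχ : (α ≫ ψ) ≫ jStar.map (jUpper.map (β⟦(1 : ℤ)⟧')) = 0 := by
    rw [aux_adj_factor adj₂ (α ≫ ψ), assoc, ← jStar.map_comp, assoc, ← assoc
      (jUpper.map (α ≫ ψ)), ← hwdef, hw, aux_radj_map_zero adj₂, comp_zero]
  -- unfold the goal
  have key : α ≫ φ ≫ (g ≫ (jUpper ⋙ jStar).map β ≫ h)⟦(1 : ℤ)⟧' =
      ((α ≫ ψ) ≫ jStar.map (jUpper.map (β⟦(1 : ℤ)⟧'))) ≫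
        jStar.map ((jUpper.commShiftIso (1 : ℤ)).hom.app B) ≫
        (jStar.commShiftIso (1 : ℤ)).hom.app (jUpper.obj B) ≫ h⟦(1 : ℤ)⟧' := by
    have e1 : (jUpper.commShiftIso (1 : ℤ)).inv.app A ≫ jUpper.map (β⟦(1 : ℤ)⟧') ≫
        (jUpper.commShiftIso (1 : ℤ)).hom.app B = (jUpper.map β)⟦(1 : ℤ)⟧' := by
      rw [jUpper.commShiftIso_hom_naturality β (1 : ℤ), Iso.inv_hom_id_app_assoc]
    have e2 : (jStar.commShiftIso (1 : ℤ)).inv.app (jUpper.obj A) ≫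
        jStar.map ((jUpper.map β)⟦(1 : ℤ)⟧') ≫
        (jStar.commShiftIso (1 : ℤ)).hom.app (jUpper.obj B) =
        (jStar.map (jUpper.map β))⟦(1 : ℤ)⟧' := by
      rw [jStar.commShiftIso_hom_naturality (jUpper.map β) (1 : ℤ),
        Iso.inv_hom_id_app_assoc]
    rw [hψdef]
    simp only [Functor.comp_map, Functor.map_comp, assoc]
    rw [← e2, ← e1]
    simp only [Functor.map_comp, assoc]
  rw [key, hχ, zero_comp]
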